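/- Let F be a number field with ring of integers 𝒪_F, and let D be a nonzero element of 𝒪_F. Consider the set M_D of all nonzero elements a ∈ F such that both D·a and D·a⁻¹ lie in 𝒪_F. Then the multiplicative action of the unit group 𝒪_F× on M_D has only finitely many orbits. -/

import Mathlib

open NumberField

/-- Let `F` be a number field with ring of integers `𝓞 F` and let `D ≠ 0` be an
algebraic integer.  The set `M_D` of nonzero `a ∈ F` with `D·a` and `D·a⁻¹`
integral has only finitely many orbits under the multiplicative action of the
unit group `(𝓞 F)ˣ`. -/
theorem stmt_15 (F : Type*) [Field F] [NumberField F] (D : 𝓞 F) (hD : D ≠ 0) :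
    ∃ T : Finset F, ∀ a : F, a ≠ 0 →
      (algebraMap (𝓞 F) F D * a) ∈ Set.range (algebraMap (𝓞 F) F) →
      (algebraMap (𝓞 F) F D * a⁻¹) ∈ Set.range (algebraMap (𝓞 F) F) →
      ∃ b ∈ T, ∃ u : (𝓞 F)ˣ, a = algebraMap (𝓞 F) F (u : 𝓞 F) * b := by
  classical
  have hinj : Function.Injective (algebraMap (𝓞 F) F) := IsFractionRing.injective _ _
  have hDF : algebraMap (𝓞 F) F D ≠ 0 := by
    simpa using fun h => hD (hinj (by simpa using h))
  have hD2 : (Ideal.span {D ^ 2} : Ideal (𝓞 F)) ≠ 0 := by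
    simp [Ideal.span_singleton_eq_bot, pow_ne_zero, hD]
  set S : Set (Ideal (𝓞 F)) := {I | I ∣ Ideal.span {D ^ 2}} with hSdef
  have hS : S.Finite := by
    refine (Ideal.finite_setOf_absNorm_le
      (Ideal.absNorm (Ideal.span {D ^ 2} : Ideal (𝓞 F)))).subset ?_
    intro I hI
    exact Nat.le_of_dvd (Nat.pos_of_ne_zero (by
      simpa [Ideal.absNorm_eq_zero_iff] using hD2)) (map_dvd Ideal.absNorm hI)
  set g : Ideal (𝓞 F) → 𝓞 F := fun I =>
    if h : ∃ x : 𝓞 F, I = Ideal.span {x} then h.choose else 0 with hg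
  refine ⟨hS.toFinset.image (fun I => algebraMap (𝓞 F) F (g I) / algebraMap (𝓞 F) F D),
    fun a ha hxr hyr => ?_⟩
  obtain ⟨x, hx⟩ := hxr
  obtain ⟨y, hy⟩ := hyr
  have hxy : x * y = D ^ 2 := by
    apply hinj
    have : algebraMap (𝓞 F) F x * algebraMap (𝓞 F) F y =
        algebraMap (𝓞 F) F D * a * (algebraMap (𝓞 F) F D * a⁻¹) := by rw [hx, hy]
    rw [map_mul, map_pow, this]
    field_simp
  have hmem : Ideal.span {x} ∈ S := ⟨Ideal.span {y}, by
    rw [Ideal.span_singleton_mul_span_singleton, hxy]⟩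
  have hex : ∃ z : 𝓞 F, Ideal.span {x} = Ideal.span {z} := ⟨x, rfl⟩
  have hspec : Ideal.span {x} = Ideal.span {g (Ideal.span {x})} := by
    rw [hg]; simpa [hex] using hex.choose_spec
  have hassoc : Associated (g (Ideal.span {x})) x :=
    (Ideal.span_singleton_eq_span_singleton.mp hspec.symm)
  obtain ⟨u, hu⟩ := hassoc
  set c := g (Ideal.span {x}) with hc
  clear_value c
  refine ⟨algebraMap (𝓞 F) F c / algebraMap (𝓞 F) F D,
    Finset.mem_image.mpr ⟨Ideal.span {x}, hS.mem_toFinset.mpr hmem, by rw [hc]⟩, u, ?_⟩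
  have ha' : a = algebraMap (𝓞 F) F x / algebraMap (𝓞 F) F D := by
    field_simp [hx, mul_comm]
    rw [hx]; ring
  rw [ha', ← hu, map_mul]
  ring
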